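/- Let $\Delta \in (0,1]$, $\zeta(z) = z - \Delta \frac{1}{\pi}(\sqrt{1-(1-2z)^2} - (1-2z)\arccos(1-2z))$ for $z \in [0,1]$. Then $\zeta$ maps $(0,1)$ into $(0,1)$, is strictly increasing where $\zeta'(z) = 1 - \Delta\frac{2}{\pi}\arccos(1-2z) > 0$, and satisfies $0 < \zeta(z) < z$ for all $z \in (0,1)$. -/

import Mathlib

open Real


-- G(θ) = sin θ - θ cos θ > 0 on (0, π)
lemma lemG' : ∀ θ ∈ Set.Ioo (0:ℝ) π, θ * Real.cos θ < Real.sin θ := by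
  have hmono : StrictMonoOn (fun θ : ℝ => Real.sin θ - θ * Real.cos θ) (Set.Icc 0 π) := by
    apply strictMonoOn_of_deriv_pos (convex_Icc 0 π)
    · fun_prop
    · intro x hx
      rw [interior_Icc] at hx
      have hd : HasDerivAt (fun θ : ℝ => Real.sin θ - θ * Real.cos θ) (x * Real.sin x) x := by
        have h1 := (Real.hasDerivAt_sin x)
        have h2 := (hasDerivAt_id x).mul (Real.hasDerivAt_cos x)
        have := h1.sub h2
        refine this.congr_deriv ?_
        simp only [id_eq]; ring
      rw [hd.deriv]
      exact mul_pos hx.1 (Real.sin_pos_of_pos_of_lt_pi hx.1 hx.2)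
  intro θ hθ
  have := hmono (Set.mem_Icc.2 ⟨le_refl 0, Real.pi_pos.le⟩) (Set.mem_Icc.2 ⟨hθ.1.le, hθ.2.le⟩) hθ.1
  simp at this
  linarith

-- H(θ) = π - π cos θ - 2 sin θ + 2 θ cos θ > 0 on (0, π)
lemma lemH' : ∀ θ ∈ Set.Ioo (0:ℝ) π,
    0 < π - π * Real.cos θ - 2 * Real.sin θ + 2 * θ * Real.cos θ := by
  set H : ℝ → ℝ := fun θ => π - π * Real.cos θ - 2 * Real.sin θ + 2 * θ * Real.cos θ with hH
  have hderiv : ∀ x : ℝ, HasDerivAt H ((π - 2 * x) * Real.sin x) x := by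
    intro x
    have h1 := ((Real.hasDerivAt_cos x).const_mul π)
    have h2 := ((Real.hasDerivAt_sin x).const_mul (2:ℝ))
    have h3 := (((hasDerivAt_id x).const_mul (2:ℝ)).mul (Real.hasDerivAt_cos x))
    have := ((hasDerivAt_const x π).sub h1).sub h2 |>.add h3
    refine this.congr_deriv ?_
    simp only [id_eq]; ring
  have hcont : Continuous H := by fun_prop
  have hmono : StrictMonoOn H (Set.Icc 0 (π/2)) := by
    apply strictMonoOn_of_deriv_pos (convex_Icc 0 (π/2)) hcont.continuousOn
    intro x hx
    rw [interior_Icc] at hx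
    rw [(hderiv x).deriv]
    have hs : 0 < Real.sin x := Real.sin_pos_of_pos_of_lt_pi hx.1 (lt_trans hx.2 (by linarith [Real.pi_pos]))
    nlinarith [hx.2]
  have hanti : StrictAntiOn H (Set.Icc (π/2) π) := by
    apply strictAntiOn_of_deriv_neg (convex_Icc (π/2) π) hcont.continuousOn
    intro x hx
    rw [interior_Icc] at hx
    rw [(hderiv x).deriv]
    have hs : 0 < Real.sin x := Real.sin_pos_of_pos_of_lt_pi (lt_trans (by linarith [Real.pi_pos]) hx.1) hx.2
    nlinarith [hx.1]
  intro θ hθ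
  have hπ := Real.pi_pos
  have hH0 : H 0 = 0 := by simp [hH]
  have hHπ : H π = 0 := by simp [hH]; ring
  rcases le_or_gt θ (π/2) with h | h
  · have := hmono (Set.mem_Icc.2 ⟨le_refl 0, by linarith⟩) (Set.mem_Icc.2 ⟨hθ.1.le, h⟩) hθ.1
    rw [hH0] at this; exact this
  · have := hanti (Set.mem_Icc.2 ⟨h.le, hθ.2.le⟩) (Set.mem_Icc.2 ⟨by linarith, le_refl π⟩) hθ.2
    rw [hHπ] at this; exact this

/-- The squared cosine distance map. -/
noncomputable def zeta (Δ z : ℝ) : ℝ :=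
  z - Δ * (1 / π) *
    (Real.sqrt (1 - (1 - 2 * z) ^ 2) - (1 - 2 * z) * Real.arccos (1 - 2 * z))


lemma zeta_pos_lt (Δ : ℝ) (hΔ : Δ ∈ Set.Ioc (0 : ℝ) 1) :
    ∀ z ∈ Set.Ioo (0 : ℝ) 1, 0 < zeta Δ z ∧ zeta Δ z < z := by
  intro z hz
  obtain ⟨hz0, hz1⟩ := hz
  have hπ := Real.pi_pos
  set θ := Real.arccos (1 - 2 * z) with hθdef
  have hθ0 : 0 < θ := Real.arccos_pos.2 (by linarith)
  have hθπ : θ < π := by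
    refine lt_of_le_of_ne (Real.arccos_le_pi _) ?_
    intro h
    have := Real.arccos_eq_pi.1 h
    linarith
  have hcos : Real.cos θ = 1 - 2 * z := Real.cos_arccos (by linarith) (by linarith)
  have hsin : Real.sqrt (1 - (1 - 2 * z) ^ 2) = Real.sin θ := (Real.sin_arccos _).symm
  have hG := lemG' θ ⟨hθ0, hθπ⟩
  have hH := lemH' θ ⟨hθ0, hθπ⟩
  rw [hcos] at hG hH
  have hzeta : zeta Δ z = z - Δ * (1 / π) * (Real.sin θ - (1 - 2 * z) * θ) := by
    rw [zeta, hsin, hθdef]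
  set P : ℝ := Real.sin θ - (1 - 2 * z) * θ with hPdef
  have hPpos : 0 < P := by rw [hPdef]; nlinarith
  have hPlt : P < π * z := by rw [hPdef]; nlinarith
  constructor
  · rw [hzeta]
    have h1 : Δ * (1 / π) * P ≤ (1 / π) * P := by
      have : 0 ≤ (1 / π) * P := by positivity
      nlinarith [hΔ.2]
    have h2 : (1 / π) * P < z := by
      rw [one_div, inv_mul_eq_div, div_lt_iff₀ hπ]
      nlinarith
    linarith
  · rw [hzeta]
    have : 0 < Δ * (1 / π) * P :=
      mul_pos (mul_pos hΔ.1 (by positivity)) hPpos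
    linarith

lemma zeta_hasDeriv (Δ x : ℝ) (hx : x ∈ Set.Ioo (0:ℝ) 1) :
    HasDerivAt (zeta Δ) (1 - Δ * (2 / π) * Real.arccos (1 - 2 * x)) x := by
  obtain ⟨hx0, hx1⟩ := hx
  have hu1 : (1 - 2 * x) ≠ 1 := by intro h; nlinarith
  have hun1 : (1 - 2 * x) ≠ -1 := by intro h; nlinarith
  have hs : (0:ℝ) < 1 - (1 - 2 * x) ^ 2 := by nlinarith
  have hsne : Real.sqrt (1 - (1 - 2 * x) ^ 2) ≠ 0 := ne_of_gt (Real.sqrt_pos.2 hs)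
  have hlin : HasDerivAt (fun z : ℝ => 1 - 2 * z) (-2) x := by
    simpa using ((hasDerivAt_id x).const_mul 2).const_sub 1
  have hsq : HasDerivAt (fun z : ℝ => 1 - (1 - 2 * z) ^ 2) (4 * (1 - 2 * x)) x := by
    have := (hasDerivAt_const x (1:ℝ)).sub (hlin.pow 2)
    refine this.congr_deriv ?_
    push_cast
    ring
  have hsqrt : HasDerivAt (fun z : ℝ => Real.sqrt (1 - (1 - 2 * z) ^ 2))
      (4 * (1 - 2 * x) / (2 * Real.sqrt (1 - (1 - 2 * x) ^ 2))) x :=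
    hsq.sqrt (ne_of_gt hs)
  have harccos : HasDerivAt (fun z : ℝ => Real.arccos (1 - 2 * z))
      (2 / Real.sqrt (1 - (1 - 2 * x) ^ 2)) x := by
    have := (Real.hasDerivAt_arccos hun1 hu1).comp x hlin
    refine this.congr_deriv ?_
    ring
  have hprod := hlin.mul harccos
  have htot := (hasDerivAt_id x).sub ((hsqrt.sub hprod).const_mul (Δ * (1 / π)))
  have htot' : HasDerivAt (zeta Δ)
      (1 - Δ * (1 / π) *
        (4 * (1 - 2 * x) / (2 * Real.sqrt (1 - (1 - 2 * x) ^ 2)) -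
          ((-2) * Real.arccos (1 - 2 * x) +
            (1 - 2 * x) * (2 / Real.sqrt (1 - (1 - 2 * x) ^ 2))))) x := by
    unfold zeta
    exact htot
  convert htot' using 1
  have hπ : (π : ℝ) ≠ 0 := ne_of_gt Real.pi_pos
  field_simp
  ring

/-- `ζ` maps `(0,1)` into `(0,1)`, satisfies `0 < ζ(z) < z` there, and is strictly
increasing on the set where `ζ'(z) = 1 - Δ(2/π) arccos(1-2z) > 0`. -/
theorem zeta_properties (Δ : ℝ) (hΔ : Δ ∈ Set.Ioc (0 : ℝ) 1) :
    (∀ z ∈ Set.Ioo (0 : ℝ) 1, zeta Δ z ∈ Set.Ioo (0 : ℝ) 1) ∧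
    StrictMonoOn (zeta Δ)
      {z | z ∈ Set.Icc (0 : ℝ) 1 ∧ 0 < 1 - Δ * (2 / π) * Real.arccos (1 - 2 * z)} ∧
    (∀ z ∈ Set.Ioo (0 : ℝ) 1, 0 < zeta Δ z ∧ zeta Δ z < z) := by
  have hmain := zeta_pos_lt Δ hΔ
  refine ⟨?_, ?_, hmain⟩
  · intro z hz
    obtain ⟨h0, h1⟩ := hmain z hz
    exact ⟨h0, lt_trans h1 hz.2⟩
  · have hπ := Real.pi_pos
    set S := {z : ℝ | z ∈ Set.Icc (0 : ℝ) 1 ∧ 0 < 1 - Δ * (2 / π) * Real.arccos (1 - 2 * z)}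
      with hSdef
    have hScap : S = Set.Icc (0:ℝ) 1 ∩
        {z : ℝ | 0 < 1 - Δ * (2 / π) * Real.arccos (1 - 2 * z)} := rfl
    have harc : Continuous fun z : ℝ => Real.arccos (1 - 2 * z) :=
      Real.continuous_arccos.comp (by fun_prop)
    have hopen : IsOpen {z : ℝ | 0 < 1 - Δ * (2 / π) * Real.arccos (1 - 2 * z)} :=
      isOpen_lt continuous_const (continuous_const.sub (continuous_const.mul harc))
    have hanti : ∀ p q : ℝ, p ≤ q →
        1 - Δ * (2 / π) * Real.arccos (1 - 2 * q) ≤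
          1 - Δ * (2 / π) * Real.arccos (1 - 2 * p) := by
      intro p q hpq
      have h1 : Real.arccos (1 - 2 * p) ≤ Real.arccos (1 - 2 * q) := by
        have := Real.monotone_arcsin (show (1 - 2 * q) ≤ 1 - 2 * p by linarith)
        simp only [Real.arccos]
        linarith
      have h2 : 0 ≤ Δ * (2 / π) :=
        (mul_pos hΔ.1 (div_pos two_pos Real.pi_pos)).le
      nlinarith [mul_nonneg h2 (sub_nonneg.2 h1)]
    have hconv : Convex ℝ S := by
      rw [hScap]
      intro a ha b hb μ ν hμ hν hμν
      simp only [Set.mem_inter_iff, Set.mem_setOf_eq, smul_eq_mul] at *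
      refine ⟨(convex_Icc (0:ℝ) 1) ha.1 hb.1 hμ hν hμν, ?_⟩
      have hν' : ν = 1 - μ := by linarith
      subst hν'
      rcases le_total a b with hab | hab
      · have hle : μ * a + (1 - μ) * b ≤ b := by
          nlinarith [mul_nonneg hμ (sub_nonneg.2 hab)]
        exact lt_of_lt_of_le hb.2 (hanti _ _ hle)
      · have hle : μ * a + (1 - μ) * b ≤ a := by
          nlinarith [mul_nonneg hν (sub_nonneg.2 hab)]
        exact lt_of_lt_of_le ha.2 (hanti _ _ hle)
    have hcont : ContinuousOn (zeta Δ) S := by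
      apply Continuous.continuousOn
      unfold zeta
      exact continuous_id.sub (continuous_const.mul
        ((Real.continuous_sqrt.comp (by fun_prop)).sub
          ((by fun_prop : Continuous fun z : ℝ => 1 - 2 * z).mul harc)))
    apply strictMonoOn_of_deriv_pos hconv hcont
    intro x hx
    rw [hScap, interior_inter, interior_Icc, hopen.interior_eq] at hx
    have hd := zeta_hasDeriv Δ x hx.1
    rw [hd.deriv]
    exact hx.2
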